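/- Let p, m, p_C, m_C be natural numbers, E11 ∈ ℂ^{p_C×m_C}, E12 ∈ ℂ^{p_C×p}, E21 ∈ ℂ^{m×m_C}, E22 ∈ ℂ^{m×p}, Σ ∈ ℂ^{p×m} with I − E22·Σ invertible, and set M = Σ·(I − E22·Σ)⁻¹, N̄11 = [[M, I, M],[I, 0, 0],[M, 0, M]], N̄12 = [M·E21; E21; M·E21], N̄21 = [E12·M, E12, E12·M], and N the 4×4-block matrix [[M, I, M, M·E21],[I, 0, 0, E21],[M, 0, M, M·E21],[E12·M, E12, E12·M, 0]]. Let V_E ∈ ℂ^{p×p}, W_E ∈ ℂ^{m×m}, V_F ∈ ℂ^{m×m}, W_F ∈ ℂ^{p×p}, V_Cw ∈ ℂ^{p_C×p_C}, W_Cw ∈ ℂ^{m_C×m_C} be invertible, and set V = diag(V_E, V_F, V_E, V_Cw) and W = diag(W_E, W_F, W_E, W_Cw). Suppose there exist a Hermitian positive definite S ∈ ℂ^{2×2} and d_F > 0 such that, with D_l = [[S₁₁·I_p, 0, S₁₂·I_p, 0],[0, d_F·I_m, 0, 0],[S₂₁·I_p, 0, S₂₂·I_p, 0],[0, 0, 0,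 I_{p_C}]] and D_r = [[S₁₁·I_m, 0, S₁₂·I_m, 0],[0, d_F·I_p, 0, 0],[S₂₁·I_m, 0, S₂₂·I_m, 0],[0, 0, 0, I_{m_C}]], the matrix D_l − (V·N·W)·D_r·(V·N·W)^H is positive definite. Then for all E_E ∈ ℂ^{m×p} and E_F ∈ ℂ^{p×m} with ‖W_E⁻¹·E_E·V_E⁻¹‖ ≤ 1 and ‖W_F⁻¹·E_F·V_F⁻¹‖ ≤ 1, the matrix I − N̄11·diag(E_E, E_F, E_E) is invertible. -/

import Mathlib

open Matrix
open scoped ComplexOrder Matrix.Norms.L2Operator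



namespace RobustAux

lemma star_dot_mulVec {n m : Type*} [Fintype n] [Fintype m]
    (A : Matrix m n ℂ) (x : m → ℂ) (y : n → ℂ) :
    star x ⬝ᵥ (A *ᵥ y) = star (Aᴴ *ᵥ x) ⬝ᵥ y := by
  rw [star_mulVec, conjTranspose_conjTranspose, dotProduct_mulVec]

lemma star_sum_elim {n m : Type*} (a : n → ℂ) (b : m → ℂ) :
    star (Sum.elim a b) = Sum.elim (star a) (star b) := by
  funext i; cases i <;> rfl

lemma dot_self_eq {k : ℕ} (v : Fin k → ℂ) :
    star v ⬝ᵥ v = ((∑ i, ‖v i‖ ^ 2 : ℝ) : ℂ) := by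
  push_cast
  refine Finset.sum_congr rfl fun i _ => ?_
  simp [Pi.star_apply, Complex.star_def, mul_comm, Complex.mul_conj']

end RobustAux

namespace RobustAux

lemma quad_le_of_opNorm_le {a b : ℕ} (A : Matrix (Fin a) (Fin b) ℂ) (hA : ‖A‖ ≤ 1)
    (x : Fin b → ℂ) : star (A *ᵥ x) ⬝ᵥ (A *ᵥ x) ≤ star x ⬝ᵥ x := by
  rw [dot_self_eq, dot_self_eq, Complex.real_le_real]
  have hx : ∀ {k : ℕ} (v : Fin k → ℂ),
      (∑ i, ‖v i‖ ^ 2 : ℝ) = ‖(EuclideanSpace.equiv (Fin k) ℂ).symm v‖ ^ 2 := by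
    intro k v
    rw [EuclideanSpace.norm_eq, Real.sq_sqrt (by positivity)]
    rfl
  rw [hx (A *ᵥ x), hx x]
  have h1 := A.l2_opNorm_mulVec ((EuclideanSpace.equiv (Fin b) ℂ).symm x)
  have h2 : ‖(EuclideanSpace.equiv (Fin a) ℂ).symm (A *ᵥ x)‖ ≤
      ‖(EuclideanSpace.equiv (Fin b) ℂ).symm x‖ := by
    refine h1.trans ?_
    have := norm_nonneg ((EuclideanSpace.equiv (Fin b) ℂ).symm x)
    nlinarith [norm_nonneg A]
  have h3 := norm_nonneg ((EuclideanSpace.equiv (Fin a) ℂ).symm (A *ᵥ x))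
  nlinarith

lemma s_quad_nonneg {k : ℕ} (Ssc : Matrix (Fin 2) (Fin 2) ℂ) (hS : Ssc.PosSemidef)
    (u v : Fin k → ℂ) :
    0 ≤ Ssc 0 0 * (star u ⬝ᵥ u) + Ssc 0 1 * (star u ⬝ᵥ v) +
        Ssc 1 0 * (star v ⬝ᵥ u) + Ssc 1 1 * (star v ⬝ᵥ v) := by
  have h : ∀ i : Fin k, 0 ≤ star ![u i, v i] ⬝ᵥ (Ssc *ᵥ ![u i, v i]) := fun i => hS.dotProduct_mulVec_nonneg _
  calc (0:ℂ) ≤ ∑ i, star ![u i, v i] ⬝ᵥ (Ssc *ᵥ ![u i, v i]) :=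
        Finset.sum_nonneg fun i _ => h i
    _ = _ := by
      simp only [dotProduct, mulVec, Finset.mul_sum, ← Finset.sum_add_distrib]
      refine Finset.sum_congr rfl fun i _ => ?_
      simp [dotProduct, mulVec, Fin.sum_univ_two]
      ring

end RobustAux

namespace RobustAux

lemma sum3_decomp {a b c : Type*} (w : (a ⊕ (b ⊕ c)) → ℂ) :
    w = Sum.elim (fun i => w (.inl i))
      (Sum.elim (fun i => w (.inr (.inl i))) (fun i => w (.inr (.inr i)))) := by
  funext i
  rcases i with i | i
  · rfl
  · rcases i with i | i <;> rfl

lemma blockdiag3_mulVec {a b c a' b' c' : Type*}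
    [Fintype a'] [Fintype b'] [Fintype c']
    (A : Matrix a a' ℂ) (B : Matrix b b' ℂ) (C : Matrix c c' ℂ)
    (x : a' → ℂ) (y : b' → ℂ) (z : c' → ℂ) :
    (fromBlocks A 0 0 (fromBlocks B 0 0 C)) *ᵥ Sum.elim x (Sum.elim y z) =
      Sum.elim (A *ᵥ x) (Sum.elim (B *ᵥ y) (C *ᵥ z)) := by
  simp [fromBlocks_mulVec]

lemma quad_L {a b : Type*} [Fintype a] [Fintype b] [DecidableEq a] [DecidableEq b]
    (s00 s01 s10 s11 c : ℂ) (v₁ : a → ℂ) (v₂ : b → ℂ) (v₃ : a → ℂ) :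
    star (Sum.elim v₁ (Sum.elim v₂ v₃)) ⬝ᵥ
      ((fromBlocks (s00 • 1) (fromCols 0 (s01 • 1)) (fromRows 0 (s10 • 1))
        (fromBlocks (c • 1) 0 0 (s11 • 1)) :
          Matrix (a ⊕ (b ⊕ a)) (a ⊕ (b ⊕ a)) ℂ) *ᵥ Sum.elim v₁ (Sum.elim v₂ v₃)) =
      s00 * (star v₁ ⬝ᵥ v₁) + s01 * (star v₁ ⬝ᵥ v₃) +
      s10 * (star v₃ ⬝ᵥ v₁) + s11 * (star v₃ ⬝ᵥ v₃) + c * (star v₂ ⬝ᵥ v₂) := by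
  simp [fromBlocks_mulVec, star_sum_elim, smul_mulVec, one_mulVec,
    dotProduct_add, dotProduct_smul, smul_eq_mul]
  ring

end RobustAux




open RobustAux

/-- Well-posedness conclusion of the frequency-pointwise robust performance corollary:
if there are structured scalings `(D_l, D_r)` (built from a Hermitian positive definite
`S ∈ ℂ^{2×2}` and `d_F > 0`) such that `D_l − (V·N·W)·D_r·(V·N·W)^H ≻ 0`, then for all
abstraction errors `E_E` with `‖W_E⁻¹·E_E·V_E⁻¹‖ ≤ 1` and reduction errors `E_F` with
`‖W_F⁻¹·E_F·V_F⁻¹‖ ≤ 1`, the matrix `I − N̄11·diag(E_E, E_F, E_E)` is invertible. -/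
theorem robust_wellPosedness
    (p m pC mC : ℕ)
    (E11 : Matrix (Fin pC) (Fin mC) ℂ) (E12 : Matrix (Fin pC) (Fin p) ℂ)
    (E21 : Matrix (Fin m) (Fin mC) ℂ) (E22 : Matrix (Fin m) (Fin p) ℂ)
    (S : Matrix (Fin p) (Fin m) ℂ) (hS : IsUnit (1 - E22 * S))
    (M : Matrix (Fin p) (Fin m) ℂ) (hM : M = S * (1 - E22 * S)⁻¹)
    (N11 : Matrix (Fin p ⊕ (Fin m ⊕ Fin p)) (Fin m ⊕ (Fin p ⊕ Fin m)) ℂ)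
    (hN11 : N11 = fromBlocks M (fromCols 1 M) (fromRows 1 M) (fromBlocks 0 0 0 M))
    (N12 : Matrix (Fin p ⊕ (Fin m ⊕ Fin p)) (Fin mC) ℂ)
    (hN12 : N12 = fromRows (M * E21) (fromRows E21 (M * E21)))
    (N21 : Matrix (Fin pC) (Fin m ⊕ (Fin p ⊕ Fin m)) ℂ)
    (hN21 : N21 = fromCols (E12 * M) (fromCols E12 (E12 * M)))
    (N : Matrix ((Fin p ⊕ (Fin m ⊕ Fin p)) ⊕ Fin pC) ((Fin m ⊕ (Fin p ⊕ Fin m)) ⊕ Fin mC) ℂ)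
    (hN : N = fromBlocks N11 N12 N21 0)
    (VE : Matrix (Fin p) (Fin p) ℂ) (WE : Matrix (Fin m) (Fin m) ℂ)
    (VF : Matrix (Fin m) (Fin m) ℂ) (WF : Matrix (Fin p) (Fin p) ℂ)
    (VCw : Matrix (Fin pC) (Fin pC) ℂ) (WCw : Matrix (Fin mC) (Fin mC) ℂ)
    (hVE : IsUnit VE) (hWE : IsUnit WE) (hVF : IsUnit VF) (hWF : IsUnit WF)
    (hVCw : IsUnit VCw) (hWCw : IsUnit WCw)
    (V : Matrix ((Fin p ⊕ (Fin m ⊕ Fin p)) ⊕ Fin pC) ((Fin p ⊕ (Fin m ⊕ Fin p)) ⊕ Fin pC) ℂ)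
    (hV : V = fromBlocks (fromBlocks VE 0 0 (fromBlocks VF 0 0 VE)) 0 0 VCw)
    (W : Matrix ((Fin m ⊕ (Fin p ⊕ Fin m)) ⊕ Fin mC) ((Fin m ⊕ (Fin p ⊕ Fin m)) ⊕ Fin mC) ℂ)
    (hW : W = fromBlocks (fromBlocks WE 0 0 (fromBlocks WF 0 0 WE)) 0 0 WCw)
    (hscaling : ∃ (Ssc : Matrix (Fin 2) (Fin 2) ℂ) (dF : ℝ), Ssc.PosDef ∧ 0 < dF ∧
      ((fromBlocks
          (fromBlocks (Ssc 0 0 • 1) (fromCols 0 (Ssc 0 1 • 1))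
            (fromRows 0 (Ssc 1 0 • 1)) (fromBlocks ((dF : ℂ) • 1) 0 0 (Ssc 1 1 • 1)))
          0 0 (1 : Matrix (Fin pC) (Fin pC) ℂ) :
          Matrix ((Fin p ⊕ (Fin m ⊕ Fin p)) ⊕ Fin pC) ((Fin p ⊕ (Fin m ⊕ Fin p)) ⊕ Fin pC) ℂ) -
        (V * N * W) *
          (fromBlocks
            (fromBlocks (Ssc 0 0 • 1) (fromCols 0 (Ssc 0 1 • 1))
              (fromRows 0 (Ssc 1 0 • 1)) (fromBlocks ((dF : ℂ) • 1) 0 0 (Ssc 1 1 • 1)))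
            0 0 (1 : Matrix (Fin mC) (Fin mC) ℂ) :
            Matrix ((Fin m ⊕ (Fin p ⊕ Fin m)) ⊕ Fin mC) ((Fin m ⊕ (Fin p ⊕ Fin m)) ⊕ Fin mC) ℂ) *
          (V * N * W)ᴴ).PosDef) :
    ∀ (EE : Matrix (Fin m) (Fin p) ℂ) (EF : Matrix (Fin p) (Fin m) ℂ),
      ‖WE⁻¹ * EE * VE⁻¹‖ ≤ 1 → ‖WF⁻¹ * EF * VF⁻¹‖ ≤ 1 →
      IsUnit (1 - N11 * fromBlocks EE 0 0 (fromBlocks EF 0 0 EE)) := by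
  obtain ⟨Ssc, dF, hSsc, hdF, hPD⟩ := hscaling
  intro EE EF hEE hEF
  set ΔE : Matrix (Fin m) (Fin p) ℂ := WE⁻¹ * EE * VE⁻¹ with hΔE
  set ΔF : Matrix (Fin p) (Fin m) ℂ := WF⁻¹ * EF * VF⁻¹ with hΔF
  set L : Matrix (Fin p ⊕ (Fin m ⊕ Fin p)) (Fin p ⊕ (Fin m ⊕ Fin p)) ℂ :=
    fromBlocks (Ssc 0 0 • 1) (fromCols 0 (Ssc 0 1 • 1))
      (fromRows 0 (Ssc 1 0 • 1)) (fromBlocks ((dF : ℂ) • 1) 0 0 (Ssc 1 1 • 1)) with hL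
  set R : Matrix (Fin m ⊕ (Fin p ⊕ Fin m)) (Fin m ⊕ (Fin p ⊕ Fin m)) ℂ :=
    fromBlocks (Ssc 0 0 • 1) (fromCols 0 (Ssc 0 1 • 1))
      (fromRows 0 (Ssc 1 0 • 1)) (fromBlocks ((dF : ℂ) • 1) 0 0 (Ssc 1 1 • 1)) with hR
  set Δ : Matrix (Fin m ⊕ (Fin p ⊕ Fin m)) (Fin p ⊕ (Fin m ⊕ Fin p)) ℂ :=
    fromBlocks EE 0 0 (fromBlocks EF 0 0 EE) with hΔ
  set Δt : Matrix (Fin m ⊕ (Fin p ⊕ Fin m)) (Fin p ⊕ (Fin m ⊕ Fin p)) ℂ :=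
    fromBlocks ΔE 0 0 (fromBlocks ΔF 0 0 ΔE) with hΔt
  set Vb : Matrix (Fin p ⊕ (Fin m ⊕ Fin p)) (Fin p ⊕ (Fin m ⊕ Fin p)) ℂ :=
    fromBlocks VE 0 0 (fromBlocks VF 0 0 VE) with hVb
  set Wb : Matrix (Fin m ⊕ (Fin p ⊕ Fin m)) (Fin m ⊕ (Fin p ⊕ Fin m)) ℂ :=
    fromBlocks WE 0 0 (fromBlocks WF 0 0 WE) with hWb
  set Nc : Matrix (Fin p ⊕ (Fin m ⊕ Fin p)) (Fin m ⊕ (Fin p ⊕ Fin m)) ℂ :=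
    Vb * N11 * Wb with hNc
  -- determinants of the scaling blocks
  have hVEd : IsUnit VE.det := (Matrix.isUnit_iff_isUnit_det VE).mp hVE
  have hWEd : IsUnit WE.det := (Matrix.isUnit_iff_isUnit_det WE).mp hWE
  have hVFd : IsUnit VF.det := (Matrix.isUnit_iff_isUnit_det VF).mp hVF
  have hWFd : IsUnit WF.det := (Matrix.isUnit_iff_isUnit_det WF).mp hWF
  -- norm bounds, quadratic form versions
  have q1 : ∀ z : Fin m → ℂ, star (ΔEᴴ *ᵥ z) ⬝ᵥ (ΔEᴴ *ᵥ z) ≤ star z ⬝ᵥ z := by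
    intro z
    exact quad_le_of_opNorm_le ΔEᴴ (by rw [Matrix.l2_opNorm_conjTranspose]; exact hEE) z
  have q2 : ∀ z : Fin p → ℂ, star (ΔFᴴ *ᵥ z) ⬝ᵥ (ΔFᴴ *ᵥ z) ≤ star z ⬝ᵥ z := by
    intro z
    exact quad_le_of_opNorm_le ΔFᴴ (by rw [Matrix.l2_opNorm_conjTranspose]; exact hEF) z
  -- the positive semidefinite gap matrix and its square root
  have hG : (1 - ΔE * ΔEᴴ).PosSemidef := by
    refine .of_dotProduct_mulVec_nonneg ?_ ?_
    · simp [Matrix.IsHermitian, conjTranspose_sub, conjTranspose_mul, Matrix.mul_assoc]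
    · intro z
      rw [sub_mulVec, dotProduct_sub, one_mulVec, sub_nonneg, ← Matrix.mulVec_mulVec,
        star_dot_mulVec]
      exact q1 z
  open scoped MatrixOrder in
  set C : Matrix (Fin m) (Fin m) ℂ := CFC.sqrt (1 - ΔE * ΔEᴴ) with hC
  open scoped MatrixOrder in
  have hC2 : C * C = 1 - ΔE * ΔEᴴ := CFC.sqrt_mul_sqrt_self _ hG.nonneg
  open scoped MatrixOrder in
  have hCH : Cᴴ = C := (CFC.sqrt_nonneg (1 - ΔE * ΔEᴴ)).posSemidef.1
  -- difference identity
  have eid : ∀ z w : Fin m → ℂ,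
      star z ⬝ᵥ w - star (ΔEᴴ *ᵥ z) ⬝ᵥ (ΔEᴴ *ᵥ w) = star (C *ᵥ z) ⬝ᵥ (C *ᵥ w) := by
    intro z w
    calc star z ⬝ᵥ w - star (ΔEᴴ *ᵥ z) ⬝ᵥ (ΔEᴴ *ᵥ w)
        = star z ⬝ᵥ w - star z ⬝ᵥ (ΔE *ᵥ (ΔEᴴ *ᵥ w)) := by
          rw [star_dot_mulVec ΔE z (ΔEᴴ *ᵥ w)]
      _ = star z ⬝ᵥ ((1 - ΔE * ΔEᴴ) *ᵥ w) := by
          rw [sub_mulVec, one_mulVec, dotProduct_sub, Matrix.mulVec_mulVec]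
      _ = star z ⬝ᵥ (C *ᵥ (C *ᵥ w)) := by rw [Matrix.mulVec_mulVec, hC2]
      _ = star (Cᴴ *ᵥ z) ⬝ᵥ (C *ᵥ w) := star_dot_mulVec C z (C *ᵥ w)
      _ = star (C *ᵥ z) ⬝ᵥ (C *ᵥ w) := by rw [hCH]
  -- the structural quadratic inequality (F4)
  have F4 : ∀ w : (Fin m ⊕ (Fin p ⊕ Fin m)) → ℂ,
      star (Δtᴴ *ᵥ w) ⬝ᵥ (L *ᵥ (Δtᴴ *ᵥ w)) ≤ star w ⬝ᵥ (R *ᵥ w) := by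
    intro w
    obtain ⟨w₁, w₂, w₃, hw⟩ : ∃ w₁ w₂ w₃, w = Sum.elim w₁ (Sum.elim w₂ w₃) :=
      ⟨_, _, _, sum3_decomp w⟩
    subst hw
    have hΔtH : Δtᴴ = fromBlocks ΔEᴴ 0 0 (fromBlocks ΔFᴴ 0 0 ΔEᴴ) := by
      rw [hΔt]
      simp [fromBlocks_conjTranspose]
    rw [hΔtH, blockdiag3_mulVec, hL, hR, quad_L, quad_L]
    have hd : (0:ℂ) ≤ (dF:ℂ) := by
      rw [show (0:ℂ) = ((0:ℝ):ℂ) from rfl, Complex.real_le_real]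
      exact hdF.le
    have hFpart : (dF:ℂ) * (star (ΔFᴴ *ᵥ w₂) ⬝ᵥ (ΔFᴴ *ᵥ w₂)) ≤ (dF:ℂ) * (star w₂ ⬝ᵥ w₂) :=
      mul_le_mul_of_nonneg_left (q2 w₂) hd
    have hSpart :
        Ssc 0 0 * (star (ΔEᴴ *ᵥ w₁) ⬝ᵥ (ΔEᴴ *ᵥ w₁)) + Ssc 0 1 * (star (ΔEᴴ *ᵥ w₁) ⬝ᵥ (ΔEᴴ *ᵥ w₃)) +
        Ssc 1 0 * (star (ΔEᴴ *ᵥ w₃) ⬝ᵥ (ΔEᴴ *ᵥ w₁)) + Ssc 1 1 * (star (ΔEᴴ *ᵥ w₃) ⬝ᵥ (ΔEᴴ *ᵥ w₃)) ≤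
        Ssc 0 0 * (star w₁ ⬝ᵥ w₁) + Ssc 0 1 * (star w₁ ⬝ᵥ w₃) +
        Ssc 1 0 * (star w₃ ⬝ᵥ w₁) + Ssc 1 1 * (star w₃ ⬝ᵥ w₃) := by
      rw [← sub_nonneg]
      have hkey := s_quad_nonneg Ssc hSsc.posSemidef (C *ᵥ w₁) (C *ᵥ w₃)
      rw [← eid w₁ w₁, ← eid w₁ w₃, ← eid w₃ w₁, ← eid w₃ w₃] at hkey
      calc (0:ℂ) ≤ _ := hkey
        _ = _ := by ring
    exact add_le_add hSpart hFpart
  -- block structure of V * N * W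
  have hVNW : V * N * W = fromBlocks Nc (Vb * (N12 * WCw)) (VCw * (N21 * Wb)) 0 := by
    rw [hV, hW, hN, hNc]
    simp only [fromBlocks_multiply, Matrix.mul_zero, Matrix.zero_mul, add_zero, zero_add, Matrix.mul_assoc]
  -- the strict quadratic inequality (F3)
  have F3 : ∀ u : (Fin p ⊕ (Fin m ⊕ Fin p)) → ℂ, u ≠ 0 →
      star (Ncᴴ *ᵥ u) ⬝ᵥ (R *ᵥ (Ncᴴ *ᵥ u)) < star u ⬝ᵥ (L *ᵥ u) := by
    intro u hu
    have huhat : (Sum.elim u 0 : ((Fin p ⊕ (Fin m ⊕ Fin p)) ⊕ Fin pC) → ℂ) ≠ 0 := by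
      intro h
      apply hu
      funext i
      have := congrFun h (Sum.inl i)
      simpa using this
    have hq := hPD.dotProduct_mulVec_pos huhat
    rw [hVNW] at hq
    rw [sub_mulVec, dotProduct_sub] at hq
    -- first term
    have h1 : star (Sum.elim u (0 : Fin pC → ℂ)) ⬝ᵥ
        ((fromBlocks L 0 0 1) *ᵥ (Sum.elim u 0 : ((Fin p ⊕ (Fin m ⊕ Fin p)) ⊕ Fin pC) → ℂ)) =
          star u ⬝ᵥ (L *ᵥ u) := by
      rw [fromBlocks_mulVec]
      simp [star_sum_elim, sumElim_dotProduct_sumElim]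
    -- second term
    set B := Vb * (N12 * WCw) with hB
    set Cc := VCw * (N21 * Wb) with hCc
    have h2 : star (Sum.elim u (0 : Fin pC → ℂ)) ⬝ᵥ
        ((fromBlocks Nc B Cc 0 * (fromBlocks R 0 0 (1 : Matrix (Fin mC) (Fin mC) ℂ) :
          Matrix ((Fin m ⊕ (Fin p ⊕ Fin m)) ⊕ Fin mC) ((Fin m ⊕ (Fin p ⊕ Fin m)) ⊕ Fin mC) ℂ) *
          (fromBlocks Nc B Cc 0)ᴴ) *ᵥ
          Sum.elim u 0) =
        star (Ncᴴ *ᵥ u) ⬝ᵥ (R *ᵥ (Ncᴴ *ᵥ u)) + star (Bᴴ *ᵥ u) ⬝ᵥ (Bᴴ *ᵥ u) := by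
      rw [Matrix.mul_assoc, ← Matrix.mulVec_mulVec, ← Matrix.mulVec_mulVec,
        star_dot_mulVec]
      rw [fromBlocks_conjTranspose, fromBlocks_mulVec]
      simp only [Sum.elim_comp_inl, Sum.elim_comp_inr, Matrix.mulVec_zero,
        Matrix.zero_mulVec, add_zero, zero_add, conjTranspose_zero]
      rw [fromBlocks_mulVec]
      simp only [Sum.elim_comp_inl, Sum.elim_comp_inr, Matrix.mulVec_zero,
        Matrix.zero_mulVec, add_zero, zero_add, one_mulVec]
      rw [star_sum_elim, sumElim_dotProduct_sumElim]
    rw [h1, h2] at hq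
    have h3 : (0:ℂ) ≤ star (Bᴴ *ᵥ u) ⬝ᵥ (Bᴴ *ᵥ u) := dotProduct_star_self_nonneg _
    rw [sub_pos] at hq
    calc star (Ncᴴ *ᵥ u) ⬝ᵥ (R *ᵥ (Ncᴴ *ᵥ u))
        ≤ star (Ncᴴ *ᵥ u) ⬝ᵥ (R *ᵥ (Ncᴴ *ᵥ u)) + star (Bᴴ *ᵥ u) ⬝ᵥ (Bᴴ *ᵥ u) :=
          le_add_of_nonneg_right h3
      _ < star u ⬝ᵥ (L *ᵥ u) := hq
  -- block identity  W̄ Δ̃ V̄ = Δ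
  have hE : WE * ΔE * VE = EE := by
    rw [hΔE, ← Matrix.mul_assoc, ← Matrix.mul_assoc, Matrix.mul_nonsing_inv _ hWEd,
      Matrix.one_mul, Matrix.mul_assoc, Matrix.nonsing_inv_mul _ hVEd, Matrix.mul_one]
  have hF2 : WF * ΔF * VF = EF := by
    rw [hΔF, ← Matrix.mul_assoc, ← Matrix.mul_assoc, Matrix.mul_nonsing_inv _ hWFd,
      Matrix.one_mul, Matrix.mul_assoc, Matrix.nonsing_inv_mul _ hVFd, Matrix.mul_one]
  have hWΔV : Wb * Δt * Vb = Δ := by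
    rw [hWb, hΔt, hVb, hΔ]
    simp only [fromBlocks_multiply, Matrix.mul_zero, Matrix.zero_mul, add_zero, zero_add]
    rw [hE, hF2]
  -- main contradiction argument
  by_contra hcon
  have hdet : (1 - N11 * Δ).det = 0 := by
    by_contra hd
    exact hcon ((Matrix.isUnit_iff_isUnit_det _).mpr (isUnit_iff_ne_zero.mpr hd))
  have hdetH : ((1 - N11 * Δ)ᴴ).det = 0 := by
    rw [Matrix.det_conjTranspose, hdet, star_zero]
  obtain ⟨v, hvne, hveq⟩ := (Matrix.exists_mulVec_eq_zero_iff).mpr hdetH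
  have hvrec : v = Δᴴ *ᵥ (N11ᴴ *ᵥ v) := by
    rw [conjTranspose_sub, conjTranspose_one, conjTranspose_mul, sub_mulVec, one_mulVec,
      sub_eq_zero] at hveq
    rw [Matrix.mulVec_mulVec]
    exact hveq
  have hVbd : IsUnit Vbᴴ.det := by
    rw [Matrix.det_conjTranspose]
    refine IsUnit.star ?_
    rw [hVb, Matrix.det_fromBlocks_zero₂₁, Matrix.det_fromBlocks_zero₂₁]
    exact hVEd.mul (hVFd.mul hVEd)
  have hVu : Vbᴴ *ᵥ ((Vbᴴ)⁻¹ *ᵥ v) = v := by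
    rw [Matrix.mulVec_mulVec, Matrix.mul_nonsing_inv _ hVbd, one_mulVec]
  set u := (Vbᴴ)⁻¹ *ᵥ v with hudef
  have hune : u ≠ 0 := by
    intro h
    apply hvne
    rw [← hVu, h, Matrix.mulVec_zero]
  have hinj : ∀ x y : (Fin p ⊕ (Fin m ⊕ Fin p)) → ℂ, Vbᴴ *ᵥ x = Vbᴴ *ᵥ y → x = y := by
    intro x y hxy
    have h7 : (Vbᴴ)⁻¹ *ᵥ (Vbᴴ *ᵥ x) = (Vbᴴ)⁻¹ *ᵥ (Vbᴴ *ᵥ y) := by rw [hxy]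
    simpa [Matrix.mulVec_mulVec, Matrix.nonsing_inv_mul _ hVbd, one_mulVec] using h7
  have hkey : Vbᴴ *ᵥ (Δtᴴ *ᵥ (Ncᴴ *ᵥ u)) = Vbᴴ *ᵥ u := by
    rw [hVu]
    rw [Matrix.mulVec_mulVec, Matrix.mulVec_mulVec]
    have h6 : Nc * (Δt * Vb) = Vb * (N11 * Δ) := by
      rw [hNc, ← hWΔV]
      simp only [Matrix.mul_assoc]
    have hM : Vbᴴ * Δtᴴ * Ncᴴ = Δᴴ * (N11ᴴ * Vbᴴ) := by
      calc Vbᴴ * Δtᴴ * Ncᴴ = (Nc * (Δt * Vb))ᴴ := by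
            simp [conjTranspose_mul, Matrix.mul_assoc]
        _ = (Vb * (N11 * Δ))ᴴ := by rw [h6]
        _ = Δᴴ * (N11ᴴ * Vbᴴ) := by simp [conjTranspose_mul, Matrix.mul_assoc]
    rw [hM, ← Matrix.mulVec_mulVec, ← Matrix.mulVec_mulVec, hVu, ← hvrec]
  have hfix : Δtᴴ *ᵥ (Ncᴴ *ᵥ u) = u := hinj _ _ hkey
  have hlt := F3 u hune
  have hle := F4 (Ncᴴ *ᵥ u)
  rw [hfix] at hle
  exact absurd (lt_of_le_of_lt hle hlt) (lt_irrefl _)
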